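/- For every z ∈ ℂ, the logarithmic potential of the uniform distribution on the unit disc is given by: −(1/π) ∫_{B_1(0)} log|w − z| d𝔏(w) = (1 − |z|²)/2 if |z| ≤ 1, and = −log|z| if |z| > 1. -/

import Mathlib

open MeasureTheory Metric

open Set Real

noncomputable section

lemma mv_c {f : ℂ → ℂ} {r : ℝ} (hr : 0 < r)
    (hf : DifferentiableOn ℂ f (closedBall 0 r)) :
    ∫ θ in (0:ℝ)..(2*Real.pi), f (circleMap 0 r θ) = (2*Real.pi : ℝ) • f 0 := by
  have h := hf.circleIntegral_sub_inv_smul (w := 0) (mem_ball_self hr)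
  simp only [circleIntegral, deriv_circleMap, sub_zero, smul_eq_mul] at h
  have hne : ∀ θ : ℝ, circleMap 0 r θ ≠ 0 := fun θ => circleMap_ne_center hr.ne' (θ := θ)
  have h2 : ∀ θ : ℝ, circleMap 0 r θ * Complex.I * ((circleMap 0 r θ)⁻¹ * f (circleMap 0 r θ))
      = Complex.I * f (circleMap 0 r θ) := by
    intro θ
    field_simp [hne θ]
  rw [intervalIntegral.integral_congr (fun θ _ => h2 θ)] at h
  rw [intervalIntegral.integral_const_mul] at h
  have hI : (Complex.I : ℂ) ≠ 0 := Complex.I_ne_zero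
  have h3 : Complex.I * ∫ θ in (0:ℝ)..(2*Real.pi), f (circleMap 0 r θ)
      = Complex.I * ((2*Real.pi : ℝ) • f 0) := by
    rw [h, Complex.real_smul]; push_cast; ring
  exact mul_left_cancel₀ hI h3

lemma mv_re {f : ℂ → ℂ} {r : ℝ} (hr : 0 < r)
    (hf : DifferentiableOn ℂ f (closedBall 0 r)) :
    ∫ θ in (0:ℝ)..(2*Real.pi), (f (circleMap 0 r θ)).re = 2*Real.pi * (f 0).re := by
  have hcont : Continuous fun θ : ℝ => f (circleMap 0 r θ) :=
    hf.continuousOn.comp_continuous (continuous_circleMap 0 r)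
      (fun θ => circleMap_mem_closedBall 0 hr.le θ)
  have hint : IntervalIntegrable (fun θ : ℝ => f (circleMap 0 r θ)) volume 0 (2*Real.pi) :=
    hcont.intervalIntegrable _ _
  have this : Complex.reCLM (∫ θ in (0:ℝ)..(2*Real.pi), f (circleMap 0 r θ)) = ∫ θ in (0:ℝ)..(2*Real.pi), (f (circleMap 0 r θ)).re := (Complex.reCLM.intervalIntegral_comp_comm hint).symm
  have h2 := mv_c hr hf
  calc ∫ θ in (0:ℝ)..(2*Real.pi), (f (circleMap 0 r θ)).re
      = Complex.reCLM (∫ θ in (0:ℝ)..(2*Real.pi), f (circleMap 0 r θ)) := this.symm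
    _ = Complex.reCLM ((2*Real.pi : ℝ) • f 0) := by rw [h2]
    _ = 2*Real.pi * (f 0).re := by simp [Complex.real_smul]

lemma circleMap_sub_ne (z : ℂ) {r : ℝ} (hr : 0 < r) (hne : ‖z‖ ≠ r) (θ : ℝ) :
    circleMap 0 r θ - z ≠ 0 := by
  intro hc
  rw [sub_eq_zero] at hc
  apply hne
  rw [← hc, norm_circleMap_zero, abs_of_pos hr]

lemma cont_g (z : ℂ) {r : ℝ} (hr : 0 < r) (hne : ‖z‖ ≠ r) :
    Continuous fun θ : ℝ => Real.log (‖circleMap 0 r θ - z‖) :=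
  (continuous_norm.comp ((continuous_circleMap 0 r).sub continuous_const)).log
    (fun θ => norm_ne_zero_iff.mpr (circleMap_sub_ne z hr hne θ))

lemma ang_lt (z : ℂ) {r : ℝ} (hr : 0 < r) (h : ‖z‖ < r) :
    ∫ θ in (0:ℝ)..(2*Real.pi), Real.log (‖circleMap 0 r θ - z‖)
      = 2*Real.pi * Real.log r := by
  set b := (starRingEnd ℂ) z with hb
  set f : ℂ → ℂ := fun w => Complex.log ((r : ℂ) - b * w) with hf
  have hre : ∀ w ∈ closedBall (0:ℂ) 1, 0 < ((r:ℂ) - b * w).re := by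
    intro w hw
    have h1 : (b * w).re ≤ ‖z‖ := by
      refine le_trans (Complex.re_le_norm _) ?_
      rw [norm_mul]
      simp only [hb, Complex.norm_conj]
      calc ‖z‖ * ‖w‖ ≤ ‖z‖ * 1 := by
            exact mul_le_mul_of_nonneg_left (by simpa [Complex.dist_eq] using hw) (norm_nonneg z)
        _ = ‖z‖ := mul_one _
    simp only [Complex.sub_re, Complex.ofReal_re]
    linarith
  have hdiff : DifferentiableOn ℂ f (closedBall 0 1) := by
    intro w hw
    refine DifferentiableAt.differentiableWithinAt ?_
    refine DifferentiableAt.clog ?_ ?_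
    · exact (differentiableAt_const _).sub ((differentiableAt_fun_id).const_mul b)
    · exact Complex.mem_slitPlane_iff.2 (Or.inl (hre w hw))
  have key : ∀ θ : ℝ, Real.log (‖circleMap 0 r θ - z‖) = (f (circleMap 0 1 θ)).re := by
    intro θ
    set c := circleMap 0 1 θ with hc'
    have hc : ‖c‖ = 1 := by simp [hc', norm_circleMap_zero]
    have hcc : c * (starRingEnd ℂ) c = 1 := by
      rw [Complex.mul_conj]
      norm_cast
      rw [← Complex.sq_norm, hc]; norm_num
    have hrc : circleMap 0 r θ = (r:ℂ) * c := by
      simp [hc', circleMap_zero]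
    have h1 : circleMap 0 r θ - z = c * ((starRingEnd ℂ) ((r:ℂ) - b * c)) := by
      rw [hrc, map_sub, map_mul, Complex.conj_conj, Complex.conj_ofReal]
      calc (r:ℂ) * c - z = (r:ℂ) * c - z * (c * (starRingEnd ℂ) c) := by rw [hcc, mul_one]
        _ = c * ((r:ℂ) - z * (starRingEnd ℂ) c) := by ring
    rw [h1, norm_mul, Complex.norm_conj, hc, one_mul, hf, Complex.log_re]
  rw [intervalIntegral.integral_congr (fun θ _ => key θ), mv_re one_pos hdiff]
  have : f 0 = Complex.log ((r:ℂ)) := by simp [hf]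
  rw [this, Complex.log_re, Complex.norm_real, Real.norm_eq_abs, abs_of_pos hr]

lemma ang_gt (z : ℂ) {r : ℝ} (hr : 0 < r) (h : r < ‖z‖) :
    ∫ θ in (0:ℝ)..(2*Real.pi), Real.log (‖circleMap 0 r θ - z‖)
      = 2*Real.pi * Real.log (‖z‖) := by
  have hz : z ≠ 0 := by
    intro h0; rw [h0] at h; simp at h; linarith
  have hzabs : (0:ℝ) < ‖z‖ := norm_pos_iff.mpr hz
  set f : ℂ → ℂ := fun w => Complex.log ((z - w) * (starRingEnd ℂ) z) with hf
  have hre : ∀ w ∈ closedBall (0:ℂ) r, 0 < ((z - w) * (starRingEnd ℂ) z).re := by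
    intro w hw
    have hw' : ‖w‖ ≤ r := by simpa [Complex.dist_eq] using hw
    have h1 : (w * (starRingEnd ℂ) z).re ≤ r * ‖z‖ := by
      refine le_trans (Complex.re_le_norm _) ?_
      rw [norm_mul, Complex.norm_conj]
      exact mul_le_mul_of_nonneg_right hw' (norm_nonneg z)
    have h2 : ((z - w) * (starRingEnd ℂ) z).re = ‖z‖ ^ 2 - (w * (starRingEnd ℂ) z).re := by
      rw [sub_mul, Complex.sub_re, Complex.mul_conj, ← Complex.sq_norm]
      norm_cast
    rw [h2]
    nlinarith
  have hdiff : DifferentiableOn ℂ f (closedBall 0 r) := by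
    intro w hw
    refine DifferentiableAt.differentiableWithinAt (DifferentiableAt.clog ?_ ?_)
    · exact ((differentiableAt_const _).sub differentiableAt_fun_id).mul_const _
    · exact Complex.mem_slitPlane_iff.2 (Or.inl (hre w hw))
  have key : ∀ θ : ℝ, (f (circleMap 0 r θ)).re
      = Real.log (‖circleMap 0 r θ - z‖) + Real.log (‖z‖) := by
    intro θ
    have hne : z - circleMap 0 r θ ≠ 0 := by
      have := circleMap_sub_ne z hr (ne_of_gt h) θ
      intro h0
      exact this (by rw [← neg_sub] at h0; simpa using congrArg Neg.neg h0)
    rw [hf, Complex.log_re, norm_mul, Complex.norm_conj,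
      Real.log_mul (norm_ne_zero_iff.mpr hne) (ne_of_gt hzabs)]
    congr 2
    exact norm_sub_rev z (circleMap 0 r θ)
  have hint : IntervalIntegrable (fun θ : ℝ => Real.log (‖circleMap 0 r θ - z‖))
      volume 0 (2*Real.pi) := (cont_g z hr (ne_of_gt h)).intervalIntegrable _ _
  have hmv := mv_re hr hdiff
  rw [intervalIntegral.integral_congr (g := fun θ : ℝ =>
      Real.log (‖circleMap 0 r θ - z‖) + Real.log (‖z‖))
      (fun θ _ => key θ)] at hmv
  rw [intervalIntegral.integral_add hint (intervalIntegrable_const)] at hmv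
  simp only [intervalIntegral.integral_const, smul_eq_mul, sub_zero] at hmv
  have hf0 : (f 0).re = 2 * Real.log (‖z‖) := by
    rw [hf]
    simp only [sub_zero]
    rw [Complex.log_re, norm_mul, Complex.norm_conj,
      Real.log_mul (ne_of_gt hzabs) (ne_of_gt hzabs)]
    ring
  rw [hf0] at hmv
  linarith [hmv]

lemma polar_symm_eq (r θ : ℝ) : Complex.polarCoord.symm (r, θ) = circleMap 0 r θ := by
  simp [Complex.polarCoord_symm_apply, circleMap_zero, Complex.exp_mul_I,
    ← Complex.ofReal_cos, ← Complex.ofReal_sin]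

lemma inner_eq (z : ℂ) {r : ℝ} (hr : 0 < r) (hne : ‖z‖ ≠ r) :
    ∫ θ in Ioo (-Real.pi) Real.pi,
        Real.log (‖Complex.polarCoord.symm (r, θ) - z‖)
      = 2*Real.pi * Real.log (max r (‖z‖)) := by
  have hper : Function.Periodic
      (fun θ : ℝ => Real.log (‖circleMap 0 r θ - z‖)) (2*Real.pi) := by
    intro θ
    simp only [periodic_circleMap 0 r θ]
  simp only [polar_symm_eq]
  calc ∫ θ in Ioo (-Real.pi) Real.pi, Real.log (‖circleMap 0 r θ - z‖)
      = ∫ θ in Ioc (-Real.pi) Real.pi, Real.log (‖circleMap 0 r θ - z‖) :=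
        (MeasureTheory.integral_Ioc_eq_integral_Ioo).symm
    _ = ∫ θ in (-Real.pi)..Real.pi, Real.log (‖circleMap 0 r θ - z‖) :=
        (intervalIntegral.integral_of_le (by linarith [Real.pi_pos])).symm
    _ = ∫ θ in (0:ℝ)..(2*Real.pi), Real.log (‖circleMap 0 r θ - z‖) := by
        have h2 := hper.intervalIntegral_add_eq (-Real.pi) 0
        rw [show -Real.pi + 2*Real.pi = Real.pi by ring, zero_add] at h2
        exact h2
    _ = 2*Real.pi * Real.log (max r (‖z‖)) := by
        rcases lt_or_gt_of_ne hne with hlt | hgt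
        · rw [ang_lt z hr hlt, max_eq_left hlt.le]
        · rw [ang_gt z hr hgt, max_eq_right hgt.le]

lemma cont_symm : Continuous fun p : ℝ × ℝ => Complex.polarCoord.symm p := by
  simp only [Complex.polarCoord_symm_apply]
  fun_prop

lemma key_polar (z : ℂ) :
    ∫ w in ball (0:ℂ) 1, Real.log (‖w - z‖)
      = ∫ p in (Ioo (0:ℝ) 1) ×ˢ Ioo (-Real.pi) Real.pi,
          p.1 • Real.log (‖Complex.polarCoord.symm p - z‖) := by
  set L : ℂ → ℝ := fun w => Real.log (‖w - z‖) with hL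
  set A : Set (ℝ × ℝ) := (fun p : ℝ × ℝ => Complex.polarCoord.symm p) ⁻¹' (ball 0 1) with hA
  have hmeasA : MeasurableSet A := cont_symm.measurable measurableSet_ball
  have h1 : ∫ w in ball (0:ℂ) 1, L w = ∫ w, (ball (0:ℂ) 1).indicator L w :=
    (MeasureTheory.integral_indicator measurableSet_ball).symm
  rw [h1, ← Complex.integral_comp_polarCoord_symm]
  have h2 : ∀ p : ℝ × ℝ, p.1 • (ball (0:ℂ) 1).indicator L (Complex.polarCoord.symm p)
      = A.indicator (fun p : ℝ × ℝ => p.1 • L (Complex.polarCoord.symm p)) p := by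
    intro p
    by_cases hp : Complex.polarCoord.symm p ∈ ball (0:ℂ) 1
    · rw [Set.indicator_of_mem hp, Set.indicator_of_mem (by exact hp)]
    · rw [Set.indicator_of_notMem hp, Set.indicator_of_notMem (by exact hp), smul_zero]
  simp only [h2]
  rw [MeasureTheory.setIntegral_indicator hmeasA]
  have hset : polarCoord.target ∩ A = (Ioo (0:ℝ) 1) ×ˢ Ioo (-Real.pi) Real.pi := by
    rw [polarCoord_target]
    ext p
    obtain ⟨r, θ⟩ := p
    simp only [Set.mem_inter_iff, Set.mem_prod, Set.mem_Ioi, Set.mem_Ioo, hA, Set.mem_preimage,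
      mem_ball, Complex.dist_eq, sub_zero, Complex.norm_polarCoord_symm]
    constructor
    · rintro ⟨⟨hr0, hθ⟩, hr1⟩
      exact ⟨⟨hr0, by rwa [abs_of_pos hr0] at hr1⟩, hθ⟩
    · rintro ⟨⟨hr0, hr1⟩, hθ⟩
      exact ⟨⟨hr0, hθ⟩, by rwa [abs_of_pos hr0]⟩
  rw [hset]

lemma ae_ne_abs (z : ℂ) : ∀ᵐ r : ℝ ∂volume, r ≠ ‖z‖ := by
  rw [MeasureTheory.ae_iff]
  have : {a : ℝ | ¬a ≠ ‖z‖} = {‖z‖} := by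
    ext a; simp
  rw [this]
  exact measure_singleton _

lemma g_le_M (z : ℂ) {r : ℝ} (hr : 0 < r) (hr1 : r < 1) (hne : r ≠ ‖z‖) (θ : ℝ) :
    Real.log (‖circleMap 0 r θ - z‖) ≤ Real.log (1 + ‖z‖) := by
  apply Real.log_le_log (norm_pos_iff.mpr (circleMap_sub_ne z hr hne.symm θ))
  calc ‖circleMap 0 r θ - z‖ ≤ ‖circleMap 0 r θ‖ + ‖z‖ :=
        norm_sub_le _ _
    _ ≤ 1 + ‖z‖ := by
        rw [norm_circleMap_zero, abs_of_pos hr]; linarith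

lemma intOn (z : ℂ) :
    IntegrableOn (fun p : ℝ × ℝ => p.1 • Real.log (‖Complex.polarCoord.symm p - z‖))
      ((Ioo (0:ℝ) 1) ×ˢ Ioo (-Real.pi) Real.pi) volume := by
  set M : ℝ := Real.log (1 + ‖z‖) with hM
  have hM0 : 0 ≤ M := Real.log_nonneg (by linarith [norm_nonneg z])
  set f : ℝ × ℝ → ℝ :=
    fun p => p.1 • Real.log (‖Complex.polarCoord.symm p - z‖) with hfdef
  have hmeas : Measurable f :=
    measurable_fst.smul ((Real.measurable_log).comp
      (continuous_norm.comp (cont_symm.sub continuous_const)).measurable)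
  rw [IntegrableOn, Measure.volume_eq_prod, ← Measure.prod_restrict]
  set μ := volume.restrict (Ioo (0:ℝ) 1)
  set ν := volume.restrict (Ioo (-Real.pi) Real.pi)
  have haesm : AEStronglyMeasurable f (μ.prod ν) := hmeas.aestronglyMeasurable
  rw [MeasureTheory.integrable_prod_iff haesm]
  have hae : ∀ᵐ r : ℝ ∂μ, r ∈ Ioo (0:ℝ) 1 ∧ r ≠ ‖z‖ := by
    filter_upwards [ae_restrict_mem measurableSet_Ioo, ae_restrict_of_ae (ae_ne_abs z)]
      with r h1 h2
    exact ⟨h1, h2⟩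
  constructor
  · filter_upwards [hae] with r hr
    obtain ⟨⟨hr0, hr1⟩, hrne⟩ := hr
    have hcont : Continuous fun θ : ℝ => f (r, θ) := by
      simp only [hfdef, polar_symm_eq]
      exact (cont_g z hr0 hrne.symm).const_smul r
    exact hcont.integrableOn_Icc.mono_set Ioo_subset_Icc_self
  · refine Integrable.mono' (g := fun r : ℝ => 4*Real.pi*M*r + 2*Real.pi*|r * Real.log r|)
      ?_ (haesm.norm.integral_prod_right') ?_
    · have hcG : Continuous fun r : ℝ => 4*Real.pi*M*r + 2*Real.pi*|r * Real.log r| := by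
        have := Real.continuous_mul_log
        fun_prop
      exact hcG.integrableOn_Icc.mono_set Ioo_subset_Icc_self
    · filter_upwards [hae] with r hr
      obtain ⟨⟨hr0, hr1⟩, hrne⟩ := hr
      set g : ℝ → ℝ := fun θ => Real.log (‖circleMap 0 r θ - z‖) with hg
      have hcg : Continuous g := cont_g z hr0 hrne.symm
      have hint_absg : Integrable (fun θ => |g θ|) ν :=
        (hcg.abs.integrableOn_Icc).mono_set Ioo_subset_Icc_self
      have hint_g : Integrable g ν :=
        (hcg.integrableOn_Icc).mono_set Ioo_subset_Icc_self
      have hnorm : (fun θ : ℝ => ‖f (r, θ)‖) = fun θ : ℝ => r * |g θ| := by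
        funext θ
        simp only [hfdef, polar_symm_eq, hg, smul_eq_mul, Real.norm_eq_abs, abs_mul,
          abs_of_pos hr0]
      have hb1 : ∀ θ : ℝ, |g θ| ≤ 2*M - g θ := by
        intro θ
        have := g_le_M z hr0 hr1 hrne θ
        rcases abs_cases (g θ) with ⟨he, _⟩ | ⟨he, _⟩ <;> rw [he] <;> [linarith; linarith]
      have hsum : ∫ θ, |g θ| ∂ν ≤ 2*M*(2*Real.pi) - 2*Real.pi * Real.log (max r (‖z‖)) := by
        have h1 : ∫ θ, |g θ| ∂ν ≤ ∫ θ, (2*M - g θ) ∂ν :=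
          integral_mono hint_absg ((integrable_const _).sub hint_g) hb1
        have h2 : ∫ θ, (2*M - g θ) ∂ν = 2*M*(2*Real.pi) - 2*Real.pi * Real.log (max r (‖z‖)) := by
          rw [integral_sub (integrable_const _) hint_g]
          have hvol : (volume (Ioo (-Real.pi) Real.pi)).toReal = 2*Real.pi := by
            rw [Real.volume_Ioo, ENNReal.toReal_ofReal (by linarith [Real.pi_pos])]
            ring
          have hginner : ∫ θ, g θ ∂ν = 2*Real.pi * Real.log (max r (‖z‖)) := by
            have := inner_eq z hr0 hrne.symm
            simp only [polar_symm_eq] at this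
            exact this
          rw [hginner, MeasureTheory.integral_const, smul_eq_mul,
            show ν.real Set.univ = (volume (Ioo (-Real.pi) Real.pi)).toReal from congrArg ENNReal.toReal (Measure.restrict_apply_univ _),
            hvol]
          ring
        linarith
      have hlogmax : Real.log r ≤ Real.log (max r (‖z‖)) :=
        Real.log_le_log hr0 (le_max_left _ _)
      have hchain : ∫ θ, ‖f (r, θ)‖ ∂ν ≤ 4*Real.pi*M*r + 2*Real.pi*|r * Real.log r| := by
        rw [hnorm, MeasureTheory.integral_const_mul]
        have h3 : ∫ θ, |g θ| ∂ν ≤ 4*Real.pi*M + 2*Real.pi*|Real.log r| := by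
          have : -Real.log (max r (‖z‖)) ≤ |Real.log r| := by
            have := neg_abs_le (Real.log r)
            linarith
          nlinarith [Real.pi_pos]
        have h4 : |r * Real.log r| = r * |Real.log r| := by
          rw [abs_mul, abs_of_pos hr0]
        rw [h4]
        nlinarith [abs_nonneg (Real.log r), Real.pi_pos,
          integral_nonneg (f := fun θ : ℝ => |g θ|) (fun θ : ℝ => abs_nonneg (g θ)) (μ := ν)]
      calc ‖∫ θ, ‖f (r, θ)‖ ∂ν‖ = ∫ θ, ‖f (r, θ)‖ ∂ν := by
            rw [Real.norm_eq_abs, _root_.abs_of_nonneg (integral_nonneg (fun θ => norm_nonneg _))]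
        _ ≤ _ := hchain

lemma hasDerivAt_F {r : ℝ} (hr : 0 ≤ r) :
    HasDerivAt (fun x : ℝ => x^2 * Real.log x / 2 - x^2/4) (r * Real.log r) r := by
  rcases eq_or_lt_of_le hr with rfl | hr0
  · rw [hasDerivAt_iff_tendsto_slope]
    have hcong : ∀ᶠ x in nhdsWithin (0:ℝ) {(0:ℝ)}ᶜ,
        x * Real.log x / 2 - x / 4 = slope (fun x : ℝ => x^2 * Real.log x / 2 - x^2/4) 0 x := by
      filter_upwards [self_mem_nhdsWithin] with x hx
      have hx0 : x ≠ 0 := hx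
      simp only [slope_def_field]
      field_simp
      ring
    have htend : Filter.Tendsto (fun x : ℝ => x * Real.log x / 2 - x / 4)
        (nhdsWithin (0:ℝ) {(0:ℝ)}ᶜ) (nhds 0) := by
      have hc : Continuous fun x : ℝ => x * Real.log x / 2 - x / 4 := by
        have := Real.continuous_mul_log
        fun_prop
      have := (hc.tendsto 0).mono_left (nhdsWithin_le_nhds (s := {(0:ℝ)}ᶜ))
      simpa [Real.log_zero] using this
    have := htend.congr' hcong
    simpa [Real.log_zero] using this
  · have h1 : HasDerivAt (fun x : ℝ => x^2) (2*r) r := by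
      simpa using hasDerivAt_pow 2 r
    have h2 : HasDerivAt Real.log r⁻¹ r := Real.hasDerivAt_log hr0.ne'
    have h3 := ((h1.mul h2).div_const 2).sub (h1.div_const 4)
    refine h3.congr_deriv ?_
    field_simp
    ring

lemma radial_ge {s : ℝ} (hs1 : 1 ≤ s) :
    ∫ r in Ioo (0:ℝ) 1, r * (2*Real.pi * Real.log (max r s)) = Real.pi * Real.log s := by
  have hcong : ∀ r ∈ Ioo (0:ℝ) 1, r * (2*Real.pi * Real.log (max r s))
      = r * (2*Real.pi * Real.log s) := by
    intro r hr
    rw [max_eq_right (le_trans hr.2.le hs1)]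
  rw [MeasureTheory.setIntegral_congr_fun measurableSet_Ioo hcong]
  rw [← MeasureTheory.integral_Ioc_eq_integral_Ioo,
    ← intervalIntegral.integral_of_le (by norm_num : (0:ℝ) ≤ 1)]
  rw [intervalIntegral.integral_mul_const, integral_id]
  ring

lemma radial_lt {s : ℝ} (hs0 : 0 ≤ s) (hs1 : s < 1) :
    ∫ r in Ioo (0:ℝ) 1, r * (2*Real.pi * Real.log (max r s)) = Real.pi * (s^2 - 1) / 2 := by
  have hFTC : ∫ x in s..1, 2*Real.pi * (x * Real.log x)
      = 2*Real.pi * ((1:ℝ)^2 * Real.log 1 / 2 - 1^2/4)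
        - 2*Real.pi * (s^2 * Real.log s / 2 - s^2/4) := by
    have hD : ∀ x ∈ Set.uIcc s 1, HasDerivAt
        (fun x : ℝ => 2*Real.pi * (x^2 * Real.log x / 2 - x^2/4)) (2*Real.pi * (x * Real.log x)) x := by
      intro x hx
      rw [Set.uIcc_of_le hs1.le] at hx
      exact (hasDerivAt_F (le_trans hs0 hx.1)).const_mul _
    have hInt : IntervalIntegrable (fun x : ℝ => 2*Real.pi * (x * Real.log x)) volume s 1 :=
      (continuous_const.mul Real.continuous_mul_log).intervalIntegrable _ _
    simpa using intervalIntegral.integral_eq_sub_of_hasDerivAt hD hInt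
  rw [← MeasureTheory.integral_Ioc_eq_integral_Ioo,
    ← intervalIntegral.integral_of_le (by norm_num : (0:ℝ) ≤ 1)]
  rcases eq_or_lt_of_le hs0 with rfl | hspos
  · have hcong : Set.EqOn (fun r : ℝ => r * (2*Real.pi * Real.log (max r 0)))
        (fun r : ℝ => 2*Real.pi * (r * Real.log r)) (Set.uIcc 0 1) := by
      intro r hr
      rw [Set.uIcc_of_le (by norm_num : (0:ℝ) ≤ 1)] at hr
      simp only [max_eq_left hr.1]
      ring
    rw [intervalIntegral.integral_congr hcong, hFTC]
    simp [Real.log_one, Real.log_zero]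
    ring
  · have hφ : Continuous fun r : ℝ => r * (2*Real.pi * Real.log (max r s)) := by
      refine continuous_id.mul (continuous_const.mul ?_)
      exact (continuous_id.max continuous_const).log
        (fun x => ne_of_gt (lt_of_lt_of_le hspos (le_max_right x s)))
    have hsplit := intervalIntegral.integral_add_adjacent_intervals
      (a := (0:ℝ)) (b := s) (c := 1) (μ := volume)
      (hφ.intervalIntegrable _ _) (hφ.intervalIntegrable _ _)
    rw [← hsplit]
    have hc1 : Set.EqOn (fun r : ℝ => r * (2*Real.pi * Real.log (max r s)))
        (fun r : ℝ => r * (2*Real.pi * Real.log s)) (Set.uIcc 0 s) := by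
      intro r hr
      rw [Set.uIcc_of_le hs0] at hr
      simp only [max_eq_right hr.2]
    have hc2 : Set.EqOn (fun r : ℝ => r * (2*Real.pi * Real.log (max r s)))
        (fun r : ℝ => 2*Real.pi * (r * Real.log r)) (Set.uIcc s 1) := by
      intro r hr
      rw [Set.uIcc_of_le hs1.le] at hr
      simp only [max_eq_left hr.1]
      ring
    rw [intervalIntegral.integral_congr hc1, intervalIntegral.integral_congr hc2, hFTC]
    rw [intervalIntegral.integral_mul_const, integral_id]
    simp only [Real.log_one]
    ring

/-- The logarithmic potential of the uniform distribution on the unit disc: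
`−(1/π) ∫_{B_1(0)} log|w − z| d𝔏(w) = (1 − |z|²)/2` if `|z| ≤ 1`, and `= −log|z|`
if `|z| > 1`. -/
theorem stmt14 (z : ℂ) :
    -(1 / Real.pi) * ∫ w in ball (0 : ℂ) 1, Real.log (‖w - z‖) =
      if ‖z‖ ≤ 1 then (1 - ‖z‖ ^ 2) / 2
      else -Real.log (‖z‖) := by
  set s := ‖z‖ with hs
  have hI : ∫ w in ball (0:ℂ) 1, Real.log (‖w - z‖)
      = ∫ r in Ioo (0:ℝ) 1, r * (2*Real.pi * Real.log (max r s)) := by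
    rw [key_polar z]
    have hOn := intOn z
    rw [IntegrableOn, Measure.volume_eq_prod, ← Measure.prod_restrict] at hOn
    rw [Measure.volume_eq_prod]
    rw [MeasureTheory.setIntegral_prod _ (by rwa [IntegrableOn, ← Measure.prod_restrict])]
    apply MeasureTheory.integral_congr_ae
    filter_upwards [ae_restrict_mem measurableSet_Ioo, ae_restrict_of_ae (ae_ne_abs z)]
      with r h1 h2
    have : ∫ θ in Ioo (-Real.pi) Real.pi,
        r • Real.log (‖Complex.polarCoord.symm (r, θ) - z‖)
        = r • ∫ θ in Ioo (-Real.pi) Real.pi,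
            Real.log (‖Complex.polarCoord.symm (r, θ) - z‖) :=
      MeasureTheory.integral_smul r _
    rw [this, inner_eq z h1.1 (Ne.symm h2), smul_eq_mul]
  rw [hI]
  have hpi := Real.pi_pos
  rcases le_or_gt s 1 with hs1 | hs1
  · rw [if_pos hs1]
    rcases eq_or_lt_of_le hs1 with heq | hlt
    · rw [heq, radial_ge le_rfl]
      simp [heq]
    · rw [radial_lt (norm_nonneg z) hlt]
      field_simp
      ring
  · rw [if_neg (not_le.2 hs1)]
    rw [radial_ge hs1.le]
    field_simp

end
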